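/- Let f ≥ 2, let T = SL(2, GF(2^f)), and let the group T × T act on the set T by (a, b)·x = a x b⁻¹. Then this action is faithful and every irredundant base for T × T has length exactly 3; in particular T × T is an IBIS group of base size 3 in this action. -/

import Mathlib

/-- The action of `T × T` on `T` given by `(a, b) • x = a * x * b⁻¹`. -/
instance diagAction (T : Type*) [Group T] : MulAction (T × T) T where
  smul p x := p.1 * x * p.2⁻¹
  one_smul x := by
    show (1 : T) * x * (1 : T)⁻¹ = x
    group
  mul_smul p q x := by
    show (p.1 * q.1) * x * (p.2 * q.2)⁻¹ = p.1 * (q.1 * x * q.2⁻¹) * p.2⁻¹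
    group

/-- The pointwise stabilizer of (the points in) a list. -/
def seqStabilizer (G : Type*) [Group G] {Ω : Type*} [MulAction G Ω] (l : List Ω) :
    Subgroup G :=
  ⨅ ω ∈ l, MulAction.stabilizer G ω

/-- A sequence `(ω_1, …, ω_t)` is irredundant if each pointwise stabilizer of an
initial segment strictly contains the pointwise stabilizer of the next initial
segment. -/
def IsIrredundantSeq (G : Type*) [Group G] {Ω : Type*} [MulAction G Ω] (l : List Ω) :
    Prop :=
  ∀ i < l.length, seqStabilizer G (l.take (i + 1)) < seqStabilizer G (l.take i)

/-- An irredundant base is an irredundant sequence whose pointwise stabilizer is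
trivial. -/
def IsIrredundantBase (G : Type*) [Group G] {Ω : Type*} [MulAction G Ω] (l : List Ω) :
    Prop :=
  IsIrredundantSeq G l ∧ seqStabilizer G l = ⊥


lemma aux_matrix_comm {F : Type*} [Field F] (g m n : Matrix (Fin 2) (Fin 2) F)
    (hg : g 0 1 ≠ 0 ∨ g 1 0 ≠ 0 ∨ g 0 0 ≠ g 1 1)
    (hm : m * g = g * m) (hn : n * g = g * n) : m * n = n * m := by
  have hm' : ∀ i j, m i 0 * g 0 j + m i 1 * g 1 j = g i 0 * m 0 j + g i 1 * m 1 j := by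
    intro i j
    have := congrFun (congrFun hm i) j
    simpa [Matrix.mul_apply, Fin.sum_univ_two] using this
  have hn' : ∀ i j, n i 0 * g 0 j + n i 1 * g 1 j = g i 0 * n 0 j + g i 1 * n 1 j := by
    intro i j
    have := congrFun (congrFun hn i) j
    simpa [Matrix.mul_apply, Fin.sum_univ_two] using this
  refine Matrix.ext (Fin.forall_fin_two.mpr
    ⟨Fin.forall_fin_two.mpr ⟨?_, ?_⟩, Fin.forall_fin_two.mpr ⟨?_, ?_⟩⟩) <;>
    simp only [Matrix.mul_apply, Fin.sum_univ_two]
  all_goals (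
  by_cases hq : g 0 1 = 0
  · by_cases hr : g 1 0 = 0
    · have hps : g 0 0 ≠ g 1 1 := by
        rcases hg with h | h | h
        · exact absurd hq h
        · exact absurd hr h
        · exact h
      have hps' : g 1 1 - g 0 0 ≠ 0 := fun h => hps (by linear_combination -h)
      have hb : m 0 1 = 0 := by
        have h := hm' 0 1; rw [hq] at h
        have h5 : m 0 1 * (g 1 1 - g 0 0) = 0 := by linear_combination h
        exact (mul_eq_zero.mp h5).resolve_right hps'
      have hc : m 1 0 = 0 := by
        have h := hm' 1 0; rw [hr] at h
        have h5 : m 1 0 * (g 0 0 - g 1 1) = 0 := by linear_combination h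
        exact (mul_eq_zero.mp h5).resolve_right (sub_ne_zero.mpr hps)
      have hb' : n 0 1 = 0 := by
        have h := hn' 0 1; rw [hq] at h
        have h5 : n 0 1 * (g 1 1 - g 0 0) = 0 := by linear_combination h
        exact (mul_eq_zero.mp h5).resolve_right hps'
      have hc' : n 1 0 = 0 := by
        have h := hn' 1 0; rw [hr] at h
        have h5 : n 1 0 * (g 0 0 - g 1 1) = 0 := by linear_combination h
        exact (mul_eq_zero.mp h5).resolve_right (sub_ne_zero.mpr hps)
      simp only [hb, hc, hb', hc']; ring
    · have hb : m 0 1 = m 1 0 * g 0 1 / g 1 0 := by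
        rw [eq_div_iff hr]; linear_combination hm' 0 0
      have hd : m 1 1 = m 0 0 - m 1 0 * (g 0 0 - g 1 1) / g 1 0 := by
        field_simp
        linear_combination hm' 1 0
      have hb' : n 0 1 = n 1 0 * g 0 1 / g 1 0 := by
        rw [eq_div_iff hr]; linear_combination hn' 0 0
      have hd' : n 1 1 = n 0 0 - n 1 0 * (g 0 0 - g 1 1) / g 1 0 := by
        field_simp
        linear_combination hn' 1 0
      simp only [hb, hd, hb', hd']; field_simp <;> ring
  · have hc : m 1 0 = m 0 1 * g 1 0 / g 0 1 := by
      rw [eq_div_iff hq]; linear_combination - hm' 0 0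
    have hd : m 1 1 = m 0 0 - m 0 1 * (g 0 0 - g 1 1) / g 0 1 := by
      field_simp
      linear_combination - hm' 0 1
    have hc' : n 1 0 = n 0 1 * g 1 0 / g 0 1 := by
      rw [eq_div_iff hq]; linear_combination - hn' 0 0
    have hd' : n 1 1 = n 0 0 - n 0 1 * (g 0 0 - g 1 1) / g 0 1 := by
      field_simp
      linear_combination - hn' 0 1
    simp only [hc, hd, hc', hd']; field_simp <;> ring)

section
variable {F : Type*} [Field F] [CharP F 2]

lemma aux_sq (x : F) (hx : x * x = 1) : x = 1 := by
  have h2 : (2:F) = 0 := by exact_mod_cast CharP.cast_eq_zero F 2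
  have h : (x+1)*(x+1) = 0 := by linear_combination hx + (x+1)*h2
  have := mul_self_eq_zero.mp h
  linear_combination this - h2

lemma aux_nonscalar (g : Matrix.SpecialLinearGroup (Fin 2) F) (hg : g ≠ 1) :
    (g : Matrix (Fin 2) (Fin 2) F) 0 1 ≠ 0 ∨ (g : Matrix (Fin 2) (Fin 2) F) 1 0 ≠ 0 ∨
      (g : Matrix (Fin 2) (Fin 2) F) 0 0 ≠ (g : Matrix (Fin 2) (Fin 2) F) 1 1 := by
  by_contra h
  push_neg at h
  obtain ⟨h1, h2, h3⟩ := h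
  have hdet := g.property
  rw [Matrix.det_fin_two] at hdet
  rw [h1, h2, h3] at hdet
  have h4 : (g : Matrix (Fin 2) (Fin 2) F) 1 1 = 1 := aux_sq _ (by linear_combination hdet)
  apply hg
  apply Subtype.ext
  refine Matrix.ext (Fin.forall_fin_two.mpr
    ⟨Fin.forall_fin_two.mpr ⟨?_, ?_⟩, Fin.forall_fin_two.mpr ⟨?_, ?_⟩⟩) <;>
    simp [h1, h2, h3, h4, Matrix.one_apply]

lemma aux_comm_SL (g m n : Matrix.SpecialLinearGroup (Fin 2) F) (hg : g ≠ 1)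
    (hm : m * g = g * m) (hn : n * g = g * n) : m * n = n * m := by
  have hm' : (m : Matrix (Fin 2) (Fin 2) F) * g = (g : Matrix (Fin 2) (Fin 2) F) * m := by
    exact_mod_cast congrArg (Subtype.val) hm
  have hn' : (n : Matrix (Fin 2) (Fin 2) F) * g = (g : Matrix (Fin 2) (Fin 2) F) * n := by
    exact_mod_cast congrArg (Subtype.val) hn
  exact Subtype.ext (aux_matrix_comm (g : Matrix (Fin 2) (Fin 2) F) m n (aux_nonscalar g hg) hm' hn')

def auxU : Matrix.SpecialLinearGroup (Fin 2) F :=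
  ⟨!![1,1;0,1], by simp [Matrix.det_fin_two_of]⟩

def auxV : Matrix.SpecialLinearGroup (Fin 2) F :=
  ⟨!![1,0;1,1], by simp [Matrix.det_fin_two_of]⟩

omit [CharP F 2] in
lemma auxU_ne_one : (auxU : Matrix.SpecialLinearGroup (Fin 2) F) ≠ 1 := by
  intro h
  have := congrFun (congrFun (congrArg Subtype.val h) 0) 1
  simp [auxU, Matrix.one_apply] at this

lemma aux_center (a : Matrix.SpecialLinearGroup (Fin 2) F)
    (ha : ∀ x : Matrix.SpecialLinearGroup (Fin 2) F, a * x = x * a) : a = 1 := by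
  have hU : (a : Matrix (Fin 2) (Fin 2) F) * ((auxU (F := F)) : Matrix (Fin 2) (Fin 2) F)
      = ((auxU (F := F)) : Matrix (Fin 2) (Fin 2) F) * a := by
    exact_mod_cast congrArg Subtype.val (ha auxU)
  have hV : (a : Matrix (Fin 2) (Fin 2) F) * ((auxV (F := F)) : Matrix (Fin 2) (Fin 2) F)
      = ((auxV (F := F)) : Matrix (Fin 2) (Fin 2) F) * a := by
    exact_mod_cast congrArg Subtype.val (ha auxV)
  have e1 := congrFun (congrFun hU 0) 0
  have e2 := congrFun (congrFun hU 0) 1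
  have e3 := congrFun (congrFun hV 0) 0
  simp [auxU, auxV, Matrix.mul_apply, Fin.sum_univ_two] at e1 e2 e3
  have e4 : (a : Matrix (Fin 2) (Fin 2) F) 0 0 = (a : Matrix (Fin 2) (Fin 2) F) 1 1 := by
    linear_combination e2
  have hdet := a.property
  rw [Matrix.det_fin_two] at hdet
  have h5 : (a : Matrix (Fin 2) (Fin 2) F) 0 0 = 1 := by
    apply aux_sq
    linear_combination hdet + (a : Matrix (Fin 2) (Fin 2) F) 0 0 * e4 +
      (a : Matrix (Fin 2) (Fin 2) F) 0 1 * e1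
  apply Subtype.ext
  refine Matrix.ext (Fin.forall_fin_two.mpr
    ⟨Fin.forall_fin_two.mpr ⟨?_, ?_⟩, Fin.forall_fin_two.mpr ⟨?_, ?_⟩⟩) <;>
    simp [e1, e3, ← e4, h5, Matrix.one_apply]
end

lemma aux_conj {T : Type*} [Group T] {a b x y : T} (hx : a * x * b⁻¹ = x) (hy : a * y * b⁻¹ = y) :
    (y⁻¹ * x) * b = b * (y⁻¹ * x) := by
  have d1 : a * x = x * b := by (conv_rhs => rw [← hx]); group
  have d2 : a * y = y * b := by (conv_rhs => rw [← hy]); group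
  have d3 : y⁻¹ * a * y = b := by rw [mul_assoc, d2]; group
  calc (y⁻¹ * x) * b = y⁻¹ * (a * x) := by rw [d1]; group
    _ = (y⁻¹ * a * y) * (y⁻¹ * x) := by group
    _ = b * (y⁻¹ * x) := by rw [d3]

lemma aux_conj' {T : Type*} [Group T] {a b x y : T} (hx : a * x * b⁻¹ = x)
    (hcomm : (y⁻¹ * x) * b = b * (y⁻¹ * x)) : a * y * b⁻¹ = y := by
  have d1 : a * x = x * b := by (conv_rhs => rw [← hx]); group
  have ha : a = x * b * x⁻¹ := by rw [← d1]; group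
  have e3 : y * b * y⁻¹ = x * b * x⁻¹ := by
    calc y * b * y⁻¹ = y * (b * (y⁻¹ * x)) * x⁻¹ := by group
      _ = y * ((y⁻¹ * x) * b) * x⁻¹ := by rw [hcomm]
      _ = x * b * x⁻¹ := by group
  rw [ha, ← e3]; group

lemma mem_seqStabilizer_iff {T : Type*} [Group T] (p : T × T) (l : List T) :
    p ∈ seqStabilizer (T × T) l ↔ ∀ x ∈ l, p.1 * x * p.2⁻¹ = x := by
  have hsmul : ∀ x : T, p • x = p.1 * x * p.2⁻¹ := fun _ => rfl
  simp [seqStabilizer, Subgroup.mem_iInf, MulAction.mem_stabilizer_iff, hsmul]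

lemma seqStab_congr {G : Type*} [Group G] {Ω : Type*} [MulAction G Ω] (l1 l2 : List Ω)
    (h : ∀ x, x ∈ l1 ↔ x ∈ l2) : seqStabilizer G l1 = seqStabilizer G l2 := by
  unfold seqStabilizer
  exact le_antisymm (le_iInf₂ fun x hx => iInf₂_le x ((h x).mpr hx))
    (le_iInf₂ fun x hx => iInf₂_le x ((h x).mp hx))

/-- For `f ≥ 2` and `T = SL(2, GF(2^f))` (identified with `PSL(2, 2^f)`), the action
of `T × T` on `T` by `(a, b) • x = a * x * b⁻¹` is faithful and every irredundant
base has length exactly `3`; in particular `T × T` is an IBIS group of base size `3`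
in this action. -/
theorem SL2_times_SL2_isIBIS_baseSize_three (f : ℕ) (hf : 2 ≤ f) :
    FaithfulSMul
      (Matrix.SpecialLinearGroup (Fin 2) (GaloisField 2 f) ×
        Matrix.SpecialLinearGroup (Fin 2) (GaloisField 2 f))
      (Matrix.SpecialLinearGroup (Fin 2) (GaloisField 2 f)) ∧
    ∀ l : List (Matrix.SpecialLinearGroup (Fin 2) (GaloisField 2 f)),
      IsIrredundantBase
        (Matrix.SpecialLinearGroup (Fin 2) (GaloisField 2 f) ×
          Matrix.SpecialLinearGroup (Fin 2) (GaloisField 2 f)) l →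
      l.length = 3 := by
  constructor
  · refine ⟨?_⟩
    intro p q h
    have hx : ∀ x, (q⁻¹ * p).1 * x * ((q⁻¹ * p).2)⁻¹ = x := by
      intro x
      have : (q⁻¹ * p) • x = x := by
        rw [mul_smul, h x, inv_smul_smul]
      exact this
    have h1 : (q⁻¹ * p).1 = (q⁻¹ * p).2 := by
      have := hx 1
      rw [mul_one] at this
      exact mul_inv_eq_one.mp this
    have hcomm : ∀ x, (q⁻¹ * p).1 * x = x * (q⁻¹ * p).1 := by
      intro x
      have hh := hx x
      rw [← h1] at hh
      calc (q⁻¹ * p).1 * x = ((q⁻¹ * p).1 * x * ((q⁻¹ * p).1)⁻¹) * (q⁻¹ * p).1 := by group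
        _ = x * (q⁻¹ * p).1 := by rw [hh]
    have hone : (q⁻¹ * p).1 = 1 := aux_center _ hcomm
    have hone2 : (q⁻¹ * p).2 = 1 := h1 ▸ hone
    have : q⁻¹ * p = 1 := Prod.ext_iff.mpr ⟨hone, hone2⟩
    exact (inv_mul_eq_one.mp this).symm
  · rintro l ⟨hirr, hbase⟩
    rcases l with _ | ⟨x1, _ | ⟨x2, _ | ⟨x3, rest⟩⟩⟩
    · exfalso
      have hmem : ((auxU, auxU) : Matrix.SpecialLinearGroup (Fin 2) (GaloisField 2 f) ×
            Matrix.SpecialLinearGroup (Fin 2) (GaloisField 2 f)) ∈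
          seqStabilizer _ ([] : List (Matrix.SpecialLinearGroup (Fin 2) (GaloisField 2 f))) := by
        rw [mem_seqStabilizer_iff]; simp
      rw [hbase, Subgroup.mem_bot] at hmem
      exact auxU_ne_one (congrArg Prod.snd hmem)
    · exfalso
      have hmem : ((x1 * auxU * x1⁻¹, auxU) : Matrix.SpecialLinearGroup (Fin 2) (GaloisField 2 f) ×
            Matrix.SpecialLinearGroup (Fin 2) (GaloisField 2 f)) ∈ seqStabilizer _ [x1] := by
        rw [mem_seqStabilizer_iff]
        intro x hxm
        simp only [List.mem_singleton] at hxm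
        subst hxm
        group
      rw [hbase, Subgroup.mem_bot] at hmem
      exact auxU_ne_one (congrArg Prod.snd hmem)
    · exfalso
      have h1 := hirr 1 (by simp)
      simp only [List.take_succ_cons, List.take_zero, List.take_one] at h1
      have hx12 : x1 ≠ x2 := by
        intro h
        have e : seqStabilizer
            (Matrix.SpecialLinearGroup (Fin 2) (GaloisField 2 f) ×
              Matrix.SpecialLinearGroup (Fin 2) (GaloisField 2 f)) [x1, x2]
            = seqStabilizer _ [x1] := seqStab_congr _ _ (by simp [h])
        rw [e] at h1
        exact lt_irrefl _ h1
      have hmem : ((x1 * (x1⁻¹ * x2) * x1⁻¹, x1⁻¹ * x2) : Matrix.SpecialLinearGroup (Fin 2) (GaloisField 2 f) ×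
            Matrix.SpecialLinearGroup (Fin 2) (GaloisField 2 f)) ∈
          seqStabilizer _ [x1, x2] := by
        rw [mem_seqStabilizer_iff]
        intro x hxm
        simp only [List.mem_cons, List.mem_singleton, List.not_mem_nil, or_false] at hxm
        rcases hxm with h | h <;> subst h <;> group
      rw [hbase, Subgroup.mem_bot] at hmem
      have : x1⁻¹ * x2 = 1 := congrArg Prod.snd hmem
      exact hx12 (inv_mul_eq_one.mp this)
    · rcases rest with _ | ⟨x4, rest'⟩
      · simp
      · exfalso
        have h1 := hirr 1 (by simp)
        have h2 := hirr 2 (by simp)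
        have h3 := hirr 3 (by simp)
        simp only [List.take_succ_cons, List.take_zero, List.take_one] at h1 h2 h3
        obtain ⟨p, hp3, hp4⟩ := SetLike.exists_of_lt h3
        rw [mem_seqStabilizer_iff] at hp3
        have c1 := hp3 x1 (by simp)
        have c2 := hp3 x2 (by simp)
        have c3 := hp3 x3 (by simp)
        have hb1 : p.2 ≠ 1 := by
          intro hb
          apply hp4
          have ha1 : p.1 = 1 := by
            have := c1
            rw [hb, inv_one, mul_one] at this
            exact mul_right_cancel (this.trans (one_mul x1).symm)
          have hp1 : p = 1 := Prod.ext_iff.mpr ⟨ha1, hb⟩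
          rw [hp1]
          exact Subgroup.one_mem _
        have comm2 : (x2⁻¹ * x1) * p.2 = p.2 * (x2⁻¹ * x1) := aux_conj c1 c2
        have comm3 : (x3⁻¹ * x1) * p.2 = p.2 * (x3⁻¹ * x1) := aux_conj c1 c3
        have hg2 : x2⁻¹ * x1 ≠ 1 := by
          intro h
          have hx : x2 = x1 := inv_mul_eq_one.mp h
          have e : seqStabilizer
              (Matrix.SpecialLinearGroup (Fin 2) (GaloisField 2 f) ×
                Matrix.SpecialLinearGroup (Fin 2) (GaloisField 2 f)) [x1, x2]
              = seqStabilizer _ [x1] := seqStab_congr _ _ (by simp [hx])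
          rw [e] at h1
          exact lt_irrefl _ h1
        apply h2.not_ge
        intro q hq
        rw [mem_seqStabilizer_iff] at hq ⊢
        intro x hxm
        simp only [List.mem_cons, List.mem_singleton, List.not_mem_nil, or_false] at hxm
        rcases hxm with h | h | h
        · exact hq x (by simp [h])
        · exact hq x (by simp [h])
        · rw [h]
          have d1 := hq x1 (by simp)
          have d2 := hq x2 (by simp)
          have commq2 : (x2⁻¹ * x1) * q.2 = q.2 * (x2⁻¹ * x1) := aux_conj d1 d2
          have commqp : q.2 * p.2 = p.2 * q.2 :=
            aux_comm_SL (x2⁻¹ * x1) q.2 p.2 hg2 commq2.symm comm2.symm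
          have commq3 : q.2 * (x3⁻¹ * x1) = (x3⁻¹ * x1) * q.2 :=
            aux_comm_SL p.2 q.2 (x3⁻¹ * x1) hb1 commqp comm3
          exact aux_conj' d1 commq3.symm
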